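/- Every square matrix over a field K is the product of two symmetric matrices over K. -/

import Mathlib

open Polynomial Module DirectSum Matrix

section aux
variable (K : Type*) [Field K]

/-- A module `W` over `K[X]` (with a compatible `K`-structure) has a "good form" if it admits a
symmetric nondegenerate `K`-bilinear form for which multiplication by `X` is self-adjoint. -/
def HasGoodForm (W : Type*) [AddCommGroup W] [Module K W] [Module (Polynomial K) W] : Prop :=
  ∃ B : W →ₗ[K] W →ₗ[K] K, (∀ x y, B x y = B y x) ∧ (∀ x, (∀ y, B x y = 0) → x = 0) ∧
    ∀ x y, B ((X : K[X]) • x) y = B x ((X : K[X]) • y)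

variable {K}

lemma hasGoodForm_quot_monic (q : K[X]) (hq : q.Monic) :
    HasGoodForm K (K[X] ⧸ Submodule.span K[X] {q}) := by
  letI : Module K[X] (AdjoinRoot q) :=
    (inferInstance : Module K[X] (K[X] ⧸ Submodule.span K[X] {q}))
  show HasGoodForm K (AdjoinRoot q)
  have hsmul : ∀ (r : K[X]) (x : AdjoinRoot q), r • x = AdjoinRoot.mk q r * x := by
    intro r x
    obtain ⟨a, rfl⟩ := AdjoinRoot.mk_surjective (g := q) x
    rfl
  rcases Nat.eq_zero_or_pos q.natDegree with h0 | hd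
  · have hq1 : q = 1 := (hq.natDegree_eq_zero).mp h0
    refine ⟨0, by simp, fun x _ => ?_, by simp⟩
    obtain ⟨a, rfl⟩ := AdjoinRoot.mk_surjective (g := q) x
    subst hq1
    exact AdjoinRoot.mk_eq_zero.mpr ⟨a, (one_mul a).symm⟩
  · set d := q.natDegree with hdd
    set l : AdjoinRoot q →ₗ[K] K := (lcoeff K (d-1)).comp (AdjoinRoot.modByMonicHom hq) with hl
    set B : AdjoinRoot q →ₗ[K] AdjoinRoot q →ₗ[K] K :=
      LinearMap.compr₂ (LinearMap.mul K (AdjoinRoot q)) l with hB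
    have hBapp : ∀ x y, B x y = l (x * y) := fun x y => rfl
    refine ⟨B, ?_, ?_, ?_⟩
    · intro x y; rw [hBapp, hBapp, mul_comm]
    · intro x hx
      by_contra hx0
      set r := AdjoinRoot.modByMonicHom hq x with hr
      have hmk : AdjoinRoot.mk q r = x := AdjoinRoot.mk_leftInverse hq x
      have hr0 : r ≠ 0 := by
        intro h; rw [h] at hmk; simp at hmk; exact hx0 hmk.symm
      have hdegr : r.degree < q.degree := by
        obtain ⟨a, rfl⟩ := AdjoinRoot.mk_surjective (g := q) x
        rw [hr, AdjoinRoot.modByMonicHom_mk]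
        exact degree_modByMonic_lt a hq
      have hk : r.natDegree < d := by
        have := natDegree_lt_natDegree hr0 hdegr
        omega
      set k := r.natDegree with hkk
      have hprod : x * AdjoinRoot.mk q (X ^ (d - 1 - k)) = AdjoinRoot.mk q (r * X ^ (d-1-k)) := by
        rw [← hmk, ← _root_.map_mul]
      have hdeg2 : (r * X ^ (d-1-k)).degree < q.degree := by
        rw [Polynomial.degree_eq_natDegree hq.ne_zero]
        have h1 : (r * X ^ (d-1-k)).degree ≤ ((k + (d-1-k) : ℕ) : WithBot ℕ) := by
          refine le_trans (degree_mul_le _ _) ?_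
          rw [degree_X_pow, Nat.cast_add]
          exact add_le_add degree_le_natDegree le_rfl
        refine lt_of_le_of_lt h1 ?_
        rw [Nat.cast_lt]
        omega
      have := hx (AdjoinRoot.mk q (X ^ (d - 1 - k)))
      rw [hBapp, hprod, hl] at this
      simp only [LinearMap.comp_apply, AdjoinRoot.modByMonicHom_mk, lcoeff_apply] at this
      rw [(Polynomial.modByMonic_eq_self_iff hq).mpr hdeg2] at this
      rw [coeff_mul_X_pow'] at this
      rw [if_pos (Nat.sub_le _ _)] at this
      have hcoeff : r.coeff k = 0 := by
        have he : d - 1 - (d - 1 - k) = k := by omega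
        rwa [he] at this
      exact hr0 (leadingCoeff_eq_zero.mp hcoeff)
    · intro x y
      rw [hsmul, hsmul, hBapp, hBapp]
      ring_nf

lemma hasGoodForm_quot (q : K[X]) (hq : q ≠ 0) :
    HasGoodForm K (K[X] ⧸ Submodule.span K[X] {q}) := by
  have hq' : (q * C q.leadingCoeff⁻¹).Monic := monic_mul_leadingCoeff_inv hq
  have hsp : Submodule.span K[X] {q} = Submodule.span K[X] {q * C q.leadingCoeff⁻¹} := by
    refine (Ideal.span_singleton_eq_span_singleton.mpr ?_ : Ideal.span {q} = _)
    have hu : IsUnit (C q.leadingCoeff⁻¹) := Polynomial.isUnit_C.mpr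
      (IsUnit.inv (isUnit_iff_ne_zero.mpr (leadingCoeff_ne_zero.mpr hq)))
    exact ⟨hu.unit, by rw [IsUnit.unit_spec]⟩
  rw [hsp]
  exact hasGoodForm_quot_monic _ hq'

lemma hasGoodForm_directSum (ι : Type*) [Fintype ι] [DecidableEq ι] (W : ι → Type*)
    [∀ i, AddCommGroup (W i)] [∀ i, Module K (W i)] [∀ i, Module K[X] (W i)]
    (h : ∀ i, HasGoodForm K (W i)) : HasGoodForm K (⨁ i, W i) := by
  choose B hsymm hnd hadj using h
  set Btot : (⨁ i, W i) →ₗ[K] (⨁ i, W i) →ₗ[K] K :=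
    ∑ i, (B i).compl₁₂ (DirectSum.component K ι W i) (DirectSum.component K ι W i) with hBtot
  have happ : ∀ x y, Btot x y = ∑ i, B i (x i) (y i) := by
    intro x y
    rw [hBtot]
    simp only [LinearMap.sum_apply, LinearMap.compl₁₂_apply, DirectSum.component]
    rfl
  have hsingle : ∀ (i : ι) (v : W i) (x : ⨁ i, W i),
      Btot x (DirectSum.lof K ι W i v) = B i (x i) v := by
    intro i v x
    rw [happ]
    rw [Finset.sum_eq_single i]
    · rw [DirectSum.lof_apply]
    · intro j _ hji
      have : (DirectSum.lof K ι W i v) j = 0 := by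
        simp [DirectSum.lof_eq_of, DirectSum.of_eq_of_ne _ _ _ hji]
      rw [this, map_zero]
    · intro hi; exact absurd (Finset.mem_univ i) hi
  refine ⟨Btot, ?_, ?_, ?_⟩
  · intro x y; rw [happ, happ]; exact Finset.sum_congr rfl fun i _ => hsymm i _ _
  · intro x hx
    refine DFinsupp.ext fun i => ?_
    refine hnd i (x i) fun v => ?_
    rw [← hsingle i v x]
    exact hx _
  · intro x y
    rw [happ, happ]
    refine Finset.sum_congr rfl fun i _ => ?_
    have h1 : ((X : K[X]) • x) i = (X : K[X]) • x i := DirectSum.smul_apply _ _ _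
    have h2 : ((X : K[X]) • y) i = (X : K[X]) • y i := DirectSum.smul_apply _ _ _
    rw [h1, h2, hadj i]

lemma HasGoodForm.of_equiv {W₁ W₂ : Type*} [AddCommGroup W₁] [Module K W₁] [Module K[X] W₁]
    [AddCommGroup W₂] [Module K W₂] [Module K[X] W₂]
    [IsScalarTower K K[X] W₁] [IsScalarTower K K[X] W₂]
    (e : W₁ ≃ₗ[K[X]] W₂) (h : HasGoodForm K W₂) : HasGoodForm K W₁ := by
  obtain ⟨B, hsymm, hnd, hadj⟩ := h
  set g : W₁ →ₗ[K] W₂ := (e.restrictScalars K : W₁ ≃ₗ[K] W₂).toLinearMap with hg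
  have hgapp : ∀ x, g x = e x := fun x => rfl
  refine ⟨B.compl₁₂ g g, fun x y => hsymm _ _, ?_, ?_⟩
  · intro x hx
    have : g x = 0 := by
      refine hnd _ fun y => ?_
      obtain ⟨y', rfl⟩ := e.surjective y
      exact hx y'
    rw [hgapp] at this
    have h2 := congrArg e.symm this
    rw [e.symm_apply_apply, map_zero] at h2
    exact h2
  · intro x y
    have hX : ∀ z : W₁, e ((X : K[X]) • z) = (X : K[X]) • e z := fun z => e.map_smul _ _
    simp only [LinearMap.compl₁₂_apply, hgapp]
    rw [hX, hX, hadj]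

lemma exists_selfadjoint_form {n : ℕ} (f : (Fin n → K) →ₗ[K] (Fin n → K)) :
    ∃ B : (Fin n → K) →ₗ[K] (Fin n → K) →ₗ[K] K,
      (∀ x y, B x y = B y x) ∧ (∀ x, (∀ y, B x y = 0) → x = 0) ∧
      ∀ x y, B (f x) y = B x (f y) := by
  classical
  have htors : Module.IsTorsion K[X] (Module.AEval' f) := by
    intro x
    refine ⟨⟨f.charpoly, mem_nonZeroDivisors_of_ne_zero f.charpoly_monic.ne_zero⟩, ?_⟩
    obtain ⟨m, rfl⟩ := (Module.AEval.of K (Fin n → K) f).surjective x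
    show (f.charpoly : K[X]) • (Module.AEval.of K (Fin n → K) f m) = 0
    rw [← Module.AEval.of_aeval_smul]
    rw [f.aeval_self_charpoly]
    simp
  obtain ⟨ι, hι, p, hp, e, ⟨equiv⟩⟩ :=
    Module.equiv_directSum_of_isTorsion (R := K[X]) (M := Module.AEval' f) htors
  haveI := hι
  have hgood : HasGoodForm K (Module.AEval' f) := by
    refine HasGoodForm.of_equiv equiv ?_
    exact hasGoodForm_directSum ι _
      (fun i => hasGoodForm_quot _ (pow_ne_zero _ (hp i).ne_zero))
  obtain ⟨B, hsymm, hnd, hadj⟩ := hgood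
  set o : (Fin n → K) →ₗ[K] Module.AEval' f :=
    (Module.AEval.of K (Fin n → K) f).toLinearMap with ho
  refine ⟨B.compl₁₂ o o, fun x y => hsymm _ _, ?_, ?_⟩
  · intro x hx
    have : o x = 0 := hnd _ fun y => by
      obtain ⟨y', rfl⟩ := (Module.AEval.of K (Fin n → K) f).surjective y
      exact hx y'
    exact (Module.AEval.of K (Fin n → K) f).injective (by rw [map_zero]; exact this)
  · intro x y
    simp only [LinearMap.compl₁₂_apply]
    have hX : ∀ z : Fin n → K, o (f z) = (X : K[X]) • o z := fun z =>
      (Module.AEval.X_smul_of (R := K) (M := Fin n → K) (a := f) z).symm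
    rw [hX, hX, hadj]

end aux

/-- Every square matrix over a field is the product of two symmetric matrices. -/
theorem stmt_8 (K : Type*) [Field K] (n : ℕ) (M : Matrix (Fin n) (Fin n) K) :
    ∃ S₁ S₂ : Matrix (Fin n) (Fin n) K, S₁.IsSymm ∧ S₂.IsSymm ∧ M = S₁ * S₂ := by
  obtain ⟨B, hsymm, hnd, hadj⟩ := exists_selfadjoint_form (K := K) M.mulVecLin
  set T : Matrix (Fin n) (Fin n) K := LinearMap.BilinForm.toMatrix' B with hT
  have hBapp : ∀ x y, B x y = x ⬝ᵥ T *ᵥ y := by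
    intro x y
    rw [hT, ← Matrix.toBilin'_apply', Matrix.toBilin'_toMatrix']
  have hTapp : ∀ i j, T i j = B (Pi.single i 1) (Pi.single j 1) := by
    intro i j
    rw [hT, LinearMap.BilinForm.toMatrix'_apply]
  have hTsymm : T.IsSymm := by
    ext i j
    rw [Matrix.transpose_apply, hTapp, hTapp]
    exact hsymm _ _
  have hdet : T.det ≠ 0 := by
    have hndB : LinearMap.BilinForm.Nondegenerate B :=
      ⟨fun m h => hnd m h, fun m h => hnd m fun y => (hsymm m y).trans (h y)⟩
    have : T.Nondegenerate := LinearMap.BilinForm.Nondegenerate.toMatrix' hndB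
    exact Matrix.nondegenerate_iff_det_ne_zero.mp this
  have hcomm : Mᵀ * T = T * M := by
    apply Matrix.toBilin'.injective
    refine LinearMap.ext fun x => LinearMap.ext fun y => ?_
    rw [Matrix.toBilin'_apply', Matrix.toBilin'_apply']
    have h := hadj x y
    rw [hBapp, hBapp, Matrix.mulVecLin_apply, Matrix.mulVecLin_apply] at h
    calc x ⬝ᵥ (Mᵀ * T) *ᵥ y = x ⬝ᵥ Mᵀ *ᵥ (T *ᵥ y) := by rw [Matrix.mulVec_mulVec]
      _ = (x ᵥ* Mᵀ) ⬝ᵥ (T *ᵥ y) := Matrix.dotProduct_mulVec _ _ _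
      _ = (M *ᵥ x) ⬝ᵥ (T *ᵥ y) := by rw [Matrix.vecMul_transpose]
      _ = x ⬝ᵥ T *ᵥ (M *ᵥ y) := h
      _ = x ⬝ᵥ (T * M) *ᵥ y := by rw [Matrix.mulVec_mulVec]
  refine ⟨T⁻¹, T * M, ?_, ?_, ?_⟩
  · show (T⁻¹)ᵀ = T⁻¹
    rw [Matrix.transpose_nonsing_inv, hTsymm.eq]
  · show (T * M)ᵀ = T * M
    rw [Matrix.transpose_mul, hTsymm.eq, hcomm]
  · rw [← mul_assoc, Matrix.nonsing_inv_mul _ (Ne.isUnit hdet), one_mul]
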